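/- (Ballot theorem) Consider lattice paths of length n starting at the origin where each step is +1 or −1. For any integer v with |v| ≤ n and v ≡ n (mod 2), the number of such paths ending at v that never revisit the origin after time 0 equals (|v|/n) times the total number of paths from the origin ending at v at time n. -/

import Mathlib

open Finset
open scoped Classical

noncomputable section

def e (b : Bool) : ℤ := if b then 1 else -1

def S (n : ℕ) (f : Fin n → Bool) (k : ℕ) : ℤ :=
  ∑ j ∈ Finset.univ.filter (fun j : Fin n => (j : ℕ) < k), e (f j)

lemma S_zero (n : ℕ) (f : Fin n → Bool) : S n f 0 = 0 := by
  simp [S]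

lemma S_top (n : ℕ) (f : Fin n → Bool) : S n f n = ∑ j, e (f j) := by
  unfold S
  congr 1
  simp [Finset.eq_univ_iff_forall, Fin.is_lt]

lemma S_succ (n : ℕ) (f : Fin n → Bool) (k : ℕ) (hk : k < n) :
    S n f (k + 1) = S n f k + e (f ⟨k, hk⟩) := by
  unfold S
  have h : Finset.univ.filter (fun j : Fin n => (j : ℕ) < k + 1)
      = insert (⟨k, hk⟩ : Fin n) (Finset.univ.filter (fun j : Fin n => (j : ℕ) < k)) := by
    ext j
    simp [Nat.lt_succ_iff_lt_or_eq, Fin.ext_iff, or_comm]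
    constructor <;> intro h <;> omega
  rw [h, Finset.sum_insert (by simp)]
  ring

lemma S_cast (n : ℕ) (f : Fin (n+1) → Bool) (k : ℕ) (hk : k ≤ n) :
    S (n+1) f k = S n (f ∘ Fin.castSucc) k := by
  induction k with
  | zero => simp [S_zero]
  | succ k ih =>
    have hk' : k < n := hk
    rw [S_succ (n+1) f k (by omega), S_succ n _ k hk', ih (by omega)]
    rfl

def posSet (n : ℕ) (v : ℤ) : Finset (Fin n → Bool) :=
  Finset.univ.filter (fun f => (∑ j, e (f j)) = v ∧ ∀ k : ℕ, 1 ≤ k → k ≤ n → 0 < S n f k)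

def nzSet (n : ℕ) (v : ℤ) : Finset (Fin n → Bool) :=
  Finset.univ.filter (fun f => (∑ j, e (f j)) = v ∧ ∀ k : ℕ, 1 ≤ k → k ≤ n → S n f k ≠ 0)

def totSet (n : ℕ) (v : ℤ) : Finset (Fin n → Bool) :=
  Finset.univ.filter (fun f => (∑ j, e (f j)) = v)

lemma posSet_zero (v : ℤ) : (posSet 0 v).card = if v = 0 then 1 else 0 := by
  unfold posSet
  rcases eq_or_ne v 0 with h | h <;> simp [h]
  · rw [Finset.filter_true_of_mem (by omega), Finset.card_singleton]
  · exact Ne.symm h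

lemma posSet_pos_zero (n : ℕ) (hn : 1 ≤ n) : posSet n 0 = ∅ := by
  ext f
  simp only [posSet, Finset.mem_filter, Finset.mem_univ, true_and, Finset.notMem_empty,
    iff_false, not_and]
  intro hsum hall
  have := hall n hn le_rfl
  rw [S_top, hsum] at this
  exact absurd this (lt_irrefl 0)

lemma snoc_sum (n : ℕ) (g : Fin n → Bool) (b : Bool) :
    (∑ j, e ((Fin.snoc g b : Fin (n+1) → Bool) j)) = (∑ j, e (g j)) + e b := by
  rw [Fin.sum_univ_castSucc]
  simp

lemma card_piece (n : ℕ) (v : ℤ) (hv : 1 ≤ v) (b : Bool) :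
    ((posSet (n+1) v).filter (fun f => f (Fin.last n) = b)).card = (posSet n (v - e b)).card := by
  apply Finset.card_bij' (fun f _ => f ∘ Fin.castSucc) (fun g _ => Fin.snoc g b)
  · -- membership forward
    intro f hf
    simp only [Finset.mem_filter, posSet, Finset.mem_univ, true_and] at hf ⊢
    obtain ⟨⟨hsum, hall⟩, hlast⟩ := hf
    have htot : (∑ j : Fin (n+1), e (f j)) = (∑ j, e ((f ∘ Fin.castSucc) j)) + e b := by
      rw [Fin.sum_univ_castSucc, hlast]; rfl
    constructor
    · rw [htot] at hsum; linarith
    · intro k hk1 hkn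
      have := hall k hk1 (by omega)
      rwa [S_cast n f k hkn] at this
  · -- membership backward
    intro g hg
    simp only [Finset.mem_filter, posSet, Finset.mem_univ, true_and] at hg ⊢
    obtain ⟨hsum, hall⟩ := hg
    refine ⟨⟨?_, ?_⟩, ?_⟩
    · rw [snoc_sum, hsum]; ring
    · intro k hk1 hkn
      rcases Nat.lt_or_ge k (n+1) with h | h
      · have hk : k ≤ n := by omega
        rw [S_cast n _ k hk]
        have : (Fin.snoc g b : Fin (n+1) → Bool) ∘ Fin.castSucc = g := by
          funext j; simp [Fin.snoc_castSucc]
        rw [this]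
        exact hall k hk1 hk
      · have hk : k = n + 1 := by omega
        subst hk
        rw [S_top, snoc_sum, hsum]
        have : v - e b + e b = v := by ring
        rw [this]; exact lt_of_lt_of_le Int.zero_lt_one hv
    · simp
  · intro f hf
    simp only [Finset.mem_filter] at hf
    rw [← hf.2]
    exact Fin.snoc_init_self f
  · intro g hg
    funext j
    simp [Fin.snoc_castSucc]

lemma pos_rec (n : ℕ) (v : ℤ) (hv : 1 ≤ v) :
    (posSet (n+1) v).card = (posSet n (v-1)).card + (posSet n (v+1)).card := by
  have hsplit := Finset.card_filter_add_card_filter_not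
    (s := posSet (n+1) v) (p := fun f => f (Fin.last n) = true)
  have h1 : ((posSet (n+1) v).filter (fun f => f (Fin.last n) = true)).card
      = (posSet n (v-1)).card := by
    have := card_piece n v hv true
    simpa [e] using this
  have h2 : ((posSet (n+1) v).filter (fun f => ¬ f (Fin.last n) = true)).card
      = (posSet n (v+1)).card := by
    have := card_piece n v hv false
    simpa [e, sub_neg_eq_add, Bool.not_eq_true] using this
  rw [← hsplit, h1, h2]

lemma pos_card : ∀ n : ℕ, 1 ≤ n → ∀ m : ℕ, n < 2*m →
    ((posSet n (2*m - n)).card : ℤ)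
      = ((n-1).choose (m-1) : ℤ) - ((n-1).choose m : ℤ) := by
  intro n
  induction n with
  | zero => omega
  | succ n ih =>
    intro _ m hm
    have hm1 : 1 ≤ m := by omega
    have hv : (1:ℤ) ≤ 2*(m:ℕ) - ((n+1 : ℕ):ℤ) := by push_cast; omega
    have step := pos_rec n (2*(m:ℕ) - ((n+1:ℕ):ℤ)) hv
    have e1 : (2*(m:ℕ) - ((n+1:ℕ):ℤ) - 1) = 2*((m-1:ℕ):ℤ) - (n:ℕ) := by
      push_cast [hm1]; ring
    have e2 : (2*(m:ℕ) - ((n+1:ℕ):ℤ) + 1) = 2*((m:ℕ):ℤ) - (n:ℕ) := by push_cast; ring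
    rw [e1, e2] at step
    rcases Nat.eq_zero_or_pos n with hn0 | hn1
    · -- length 1
      subst hn0
      rw [step, posSet_zero, posSet_zero]
      have hne2 : (2*((m:ℕ):ℤ) - ((0:ℕ):ℤ)) ≠ 0 := by push_cast; omega
      rcases eq_or_ne m 1 with hm' | hm'
      · subst hm'
        rw [if_pos (by norm_num), if_neg hne2]
        simp
      · rw [if_neg (by push_cast; omega), if_neg hne2]
        rw [Nat.choose_eq_zero_of_lt (show 0 < m - 1 by omega),
          Nat.choose_eq_zero_of_lt (show 0 < m by omega)]
        simp
    · have ih2 := ih hn1 m (by omega)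
      have hm2 : 2 ≤ m := by omega
      have pascal : (n.choose (m-1) : ℤ)
          = ((n-1).choose (m-2) : ℤ) + ((n-1).choose (m-1) : ℤ) := by
        have h := Nat.choose_succ_succ (n-1) (m-2)
        simp only [Nat.succ_eq_add_one] at h
        rw [show n-1+1 = n from by omega, show m-2+1 = m-1 from by omega] at h
        exact_mod_cast h
      have pascal2 : (n.choose m : ℤ)
          = ((n-1).choose (m-1) : ℤ) + ((n-1).choose m : ℤ) := by
        have h := Nat.choose_succ_succ (n-1) (m-1)
        simp only [Nat.succ_eq_add_one] at h
        rw [show n-1+1 = n from by omega, show m-1+1 = m from by omega] at h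
        exact_mod_cast h
      rw [show (n+1) - 1 = n from rfl, step]
      push_cast
      rcases Nat.lt_or_ge n (2*(m-1)) with hcase | hcase
      · -- v ≥ 2
        have ih1 := ih hn1 (m-1) hcase
        rw [show m - 1 - 1 = m - 2 from by omega] at ih1
        rw [ih1, ih2]
        linarith [pascal, pascal2]
      · -- v = 1, n = 2m - 2
        have hn2 : n = 2*m - 2 := by omega
        have hz : (2*((m-1:ℕ):ℤ) - (n:ℕ)) = 0 := by push_cast [hm1]; omega
        rw [hz, posSet_pos_zero n hn1, ih2]
        have csym : (n-1).choose (m-2) = (n-1).choose (m-1) := by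
          have h1 : m - 1 ≤ n - 1 := by omega
          have := Nat.choose_symm h1
          rwa [show (n-1) - (m-1) = m - 2 from by omega] at this
        simp only [Finset.card_empty, Nat.cast_zero, zero_add]
        have : ((n-1).choose (m-2) : ℤ) = ((n-1).choose (m-1) : ℤ) := by exact_mod_cast csym
        linarith [pascal, pascal2]

lemma S_step_bound (n : ℕ) (f : Fin n → Bool) (k : ℕ) (hk : k < n) :
    S n f (k+1) ≤ S n f k + 1 := by
  rw [S_succ n f k hk]
  have : e (f ⟨k, hk⟩) ≤ 1 := by unfold e; split <;> omega
  omega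

lemma neg_propagate (n : ℕ) (f : Fin n → Bool)
    (hall : ∀ k : ℕ, 1 ≤ k → k ≤ n → S n f k ≠ 0) :
    ∀ d k : ℕ, k + d = n → S n f k < 0 → S n f n < 0 := by
  intro d
  induction d with
  | zero => intro k hk hneg; rwa [show k = n from by omega] at hneg
  | succ d ih =>
    intro k hk hneg
    have hkn : k < n := by omega
    have h1 : S n f (k+1) ≤ S n f k + 1 := S_step_bound n f k hkn
    have h2 : S n f (k+1) ≠ 0 := hall (k+1) (by omega) (by omega)
    exact ih (k+1) (by omega) (by omega)

lemma nz_eq_pos (n : ℕ) (v : ℤ) (hv : 1 ≤ v) : nzSet n v = posSet n v := by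
  ext f
  simp only [nzSet, posSet, Finset.mem_filter, Finset.mem_univ, true_and]
  constructor
  · rintro ⟨hsum, hall⟩
    refine ⟨hsum, fun k hk1 hkn => ?_⟩
    by_contra hle
    push_neg at hle
    have hne := hall k hk1 hkn
    have hneg : S n f k < 0 := lt_of_le_of_ne hle hne
    have := neg_propagate n f hall (n - k) k (by omega) hneg
    rw [S_top, hsum] at this
    omega
  · rintro ⟨hsum, hall⟩
    exact ⟨hsum, fun k hk1 hkn => ne_of_gt (hall k hk1 hkn)⟩

lemma e_not (b : Bool) : e (!b) = - e b := by cases b <;> simp [e]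

lemma S_not (n : ℕ) (f : Fin n → Bool) (k : ℕ) :
    S n (fun j => !(f j)) k = - S n f k := by
  unfold S
  rw [← Finset.sum_neg_distrib]
  exact Finset.sum_congr rfl fun j _ => e_not (f j)

lemma nz_neg (n : ℕ) (v : ℤ) : (nzSet n v).card = (nzSet n (-v)).card := by
  apply Finset.card_nbij' (fun f => fun j => !(f j)) (fun f => fun j => !(f j))
  · intro f hf
    simp only [nzSet, Finset.mem_coe, Finset.mem_filter, Finset.mem_univ, true_and] at hf ⊢
    obtain ⟨hsum, hall⟩ := hf
    constructor
    · rw [show (∑ j, e (!(f j))) = - ∑ j, e (f j) from by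
        rw [← Finset.sum_neg_distrib]; exact Finset.sum_congr rfl fun j _ => e_not (f j), hsum]
    · intro k hk1 hkn
      rw [S_not]
      simpa using hall k hk1 hkn
  · intro f hf
    simp only [nzSet, Finset.mem_coe, Finset.mem_filter, Finset.mem_univ, true_and] at hf ⊢
    obtain ⟨hsum, hall⟩ := hf
    constructor
    · rw [show (∑ j, e (!(f j))) = - ∑ j, e (f j) from by
        rw [← Finset.sum_neg_distrib]; exact Finset.sum_congr rfl fun j _ => e_not (f j), hsum]
      ring
    · intro k hk1 hkn
      rw [S_not]
      simpa using hall k hk1 hkn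
  · intro f _; funext j; simp
  · intro f _; funext j; simp

lemma sum_e_eq (n : ℕ) (f : Fin n → Bool) :
    (∑ j, e (f j)) = 2 * ((Finset.univ.filter (fun j => f j = true)).card : ℤ) - n := by
  rw [← Finset.sum_filter_add_sum_filter_not Finset.univ (fun j => f j = true)]
  have h1 : ∑ j ∈ Finset.univ.filter (fun j => f j = true), e (f j)
      = ((Finset.univ.filter (fun j : Fin n => f j = true)).card : ℤ) := by
    rw [Finset.sum_congr rfl (fun j hj => ?_), Finset.sum_const, nsmul_eq_mul, mul_one]
    simp only [Finset.mem_filter] at hj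
    simp [e, hj.2]
  have h2 : ∑ j ∈ Finset.univ.filter (fun j => ¬ f j = true), e (f j)
      = -((Finset.univ.filter (fun j : Fin n => ¬ f j = true)).card : ℤ) := by
    rw [Finset.sum_congr rfl (fun j hj => ?_), Finset.sum_const, nsmul_eq_mul, mul_neg_one]
    simp only [Finset.mem_filter, Bool.not_eq_true] at hj
    simp [e, hj.2]
  rw [h1, h2]
  have h3 : (Finset.univ.filter (fun j : Fin n => f j = true)).card
      + (Finset.univ.filter (fun j : Fin n => ¬ f j = true)).card = n := by
    rw [Finset.card_filter_add_card_filter_not, Finset.card_univ, Fintype.card_fin]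
  have := congrArg (fun x : ℕ => (x : ℤ)) h3
  push_cast at this
  linarith

lemma tot_card (n m : ℕ) (hm : m ≤ n) :
    (totSet n (2*(m:ℤ) - n)).card = n.choose m := by
  have hset : totSet n (2*(m:ℤ) - n)
      = Finset.univ.filter (fun f : Fin n → Bool =>
          (Finset.univ.filter (fun j => f j = true)).card = m) := by
    ext f
    simp only [totSet, Finset.mem_filter, Finset.mem_univ, true_and]
    rw [sum_e_eq]
    constructor
    · intro h
      have : ((Finset.univ.filter (fun j : Fin n => f j = true)).card : ℤ) = m := by linarith
      exact_mod_cast this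
    · intro h; rw [h]
  have hpc : (Finset.powersetCard m (Finset.univ : Finset (Fin n))).card = n.choose m := by
    rw [Finset.card_powersetCard]; simp
  rw [hset, ← hpc]
  · refine Finset.card_nbij' (fun f => Finset.univ.filter (fun j => f j = true))
      (fun s => fun j => decide (j ∈ s)) ?_ ?_ ?_ ?_
    · intro f hf
      simp only [Finset.mem_coe, Finset.mem_filter, Finset.mem_univ, true_and] at hf
      rw [Finset.mem_coe, Finset.mem_powersetCard]
      exact ⟨Finset.subset_univ _, hf⟩
    · intro s hs
      rw [Finset.mem_coe, Finset.mem_powersetCard] at hs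
      simp only [Finset.mem_coe, Finset.mem_filter, Finset.mem_univ, true_and]
      rw [← hs.2]
      congr 1
      ext j
      simp
    · intro f _
      funext j
      simp
    · intro s _
      ext j
      simp

lemma nz_zero (n : ℕ) (hn : 1 ≤ n) : nzSet n 0 = ∅ := by
  ext f
  simp only [nzSet, Finset.mem_filter, Finset.mem_univ, true_and, Finset.notMem_empty,
    iff_false, not_and]
  intro hsum hall
  exact hall n hn le_rfl (by rw [S_top, hsum])

lemma natcard_eq (n : ℕ) (p : (Fin n → Bool) → Prop) :
    Nat.card {f // p f} = (Finset.univ.filter p).card := by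
  rw [Nat.card_eq_fintype_card, Fintype.card_subtype]

lemma final_frac (n M : ℕ) (h1 : n < 2*M) (h2 : M ≤ n) :
    (((n-1).choose (M-1) : ℚ) - ((n-1).choose M : ℚ))
      = (2*(M:ℚ) - n) / n * (n.choose M : ℚ) := by
  have hn1 : 1 ≤ n := by omega
  have hM1 : 1 ≤ M := by omega
  have hn0 : (n:ℚ) ≠ 0 := by positivity
  rw [div_mul_eq_mul_div, eq_div_iff hn0]
  have hA : n * (n-1).choose (M-1) = M * n.choose M := by
    have := Nat.add_one_mul_choose_eq (n-1) (M-1)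
    rw [show n - 1 + 1 = n from by omega, show M - 1 + 1 = M from by omega] at this
    rw [this, Nat.mul_comm]
  have hB : n * (n-1).choose M = (n - M) * n.choose M := by
    rcases eq_or_lt_of_le h2 with hMn | hMn
    · subst hMn
      rw [Nat.choose_eq_zero_of_lt (by omega)]
      simp
    · have h3 := Nat.add_one_mul_choose_eq (n-1) (n-M-1)
      rw [show n - 1 + 1 = n from by omega, show n - M - 1 + 1 = n - M from by omega] at h3
      have h4 : (n-1).choose (n-M-1) = (n-1).choose M := by
        have := Nat.choose_symm (show M ≤ n-1 from by omega)
        rwa [show n - 1 - M = n - M - 1 from by omega] at this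
      have h5 : n.choose (n-M) = n.choose M := Nat.choose_symm h2
      rw [h4, h5] at h3
      rw [h3, Nat.mul_comm]
  have hA' : (n:ℚ) * (n-1).choose (M-1) = M * n.choose M := by exact_mod_cast hA
  have hB' : (n:ℚ) * (n-1).choose M = ((n:ℚ) - M) * n.choose M := by
    have : ((n - M : ℕ) : ℚ) = (n:ℚ) - M := by push_cast [h2]; ring
    rw [← this]; exact_mod_cast hB
  ring_nf
  ring_nf at hA' hB'
  linarith

theorem stmt_3 (n : ℕ) (hn : 1 ≤ n) (v : ℤ) (hv : |v| ≤ (n : ℤ))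
    (hpar : (v + n) % 2 = 0) :
    (Nat.card {f : Fin n → Bool //
        (∑ j : Fin n, (if f j then (1:ℤ) else -1)) = v ∧
        ∀ k : ℕ, 1 ≤ k → k ≤ n →
          (∑ j ∈ Finset.univ.filter (fun j : Fin n => (j : ℕ) < k),
            (if f j then (1:ℤ) else -1)) ≠ 0} : ℚ)
      = ((|v| : ℤ) : ℚ) / (n : ℚ) *
        (Nat.card {f : Fin n → Bool //
          (∑ j : Fin n, (if f j then (1:ℤ) else -1)) = v} : ℚ) := by
  obtain ⟨c, hc⟩ : (2:ℤ) ∣ (v + n) := Int.dvd_of_emod_eq_zero hpar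
  have hvn : -(n:ℤ) ≤ v := neg_le_of_abs_le hv
  have hvn' : v ≤ n := le_of_abs_le hv
  have hc0 : 0 ≤ c := by omega
  set m : ℕ := c.toNat with hm
  have hmc : (m:ℤ) = c := Int.toNat_of_nonneg hc0
  have hvm : v = 2*(m:ℤ) - n := by omega
  have hmn : m ≤ n := by omega
  -- rewrite the two Nat.cards as finset cards
  have hL : Nat.card {f : Fin n → Bool //
        (∑ j : Fin n, (if f j then (1:ℤ) else -1)) = v ∧
        ∀ k : ℕ, 1 ≤ k → k ≤ n →
          (∑ j ∈ Finset.univ.filter (fun j : Fin n => (j : ℕ) < k),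
            (if f j then (1:ℤ) else -1)) ≠ 0} = (nzSet n v).card := by
    rw [natcard_eq]
    unfold nzSet
    congr 1
    ext f
    simp only [S, e]
    convert Iff.rfl
    congr 1
  have hR : Nat.card {f : Fin n → Bool //
        (∑ j : Fin n, (if f j then (1:ℤ) else -1)) = v} = (totSet n v).card := by
    rw [natcard_eq]
    unfold totSet
    congr 1
    ext f
    simp only [e]
    convert Iff.rfl
    congr 1
  rw [hL, hR]
  clear hL hR
  have htot : (totSet n v).card = n.choose m := by rw [hvm]; exact tot_card n m hmn
  rcases lt_trichotomy v 0 with hneg | hzero | hpos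
  · -- v < 0
    have habs : |v| = -v := abs_of_neg hneg
    set M : ℕ := n - m with hM
    have hMn : M ≤ n := Nat.sub_le n m
    have h2M : n < 2*M := by omega
    have hMv : -v = 2*(M:ℤ) - n := by push_cast [hM, hmn]; omega
    have hcard : ((nzSet n v).card : ℤ)
        = ((n-1).choose (M-1) : ℤ) - ((n-1).choose M : ℤ) := by
      rw [nz_neg n v, nz_eq_pos n (-v) (by omega)]
      rw [show -v = 2*(M:ℕ) - (n:ℤ) from hMv]
      exact pos_card n hn M h2M
    have hchoose : n.choose m = n.choose M := (Nat.choose_symm hmn).symm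
    rw [htot, hchoose, habs]
    have := final_frac n M h2M hMn
    rw [show ((nzSet n v).card : ℚ) = ((n-1).choose (M-1) : ℚ) - ((n-1).choose M : ℚ) from by
      exact_mod_cast hcard]
    rw [this]
    congr 1
    rw [hMv]
    push_cast
    ring
  · -- v = 0
    subst hzero
    rw [nz_zero n hn]
    simp
  · -- v > 0
    have habs : |v| = v := abs_of_pos hpos
    have h2M : n < 2*m := by omega
    have hM1 : 1 ≤ m := by omega
    have hcard : ((nzSet n v).card : ℤ)
        = ((n-1).choose (m-1) : ℤ) - ((n-1).choose m : ℤ) := by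
      rw [nz_eq_pos n v (by omega), show v = 2*(m:ℕ) - (n:ℤ) from hvm]
      exact pos_card n hn m h2M
    rw [htot, habs]
    have := final_frac n m h2M hmn
    rw [show ((nzSet n v).card : ℚ) = ((n-1).choose (m-1) : ℚ) - ((n-1).choose m : ℚ) from by
      exact_mod_cast hcard]
    rw [this]
    congr 1
    rw [hvm]
    push_cast
    ring
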